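/- Let E, H₁, H₂ be complex Hilbert spaces. Suppose U₁ on E ⊕ H₁ given by U₁(e, h₁) = (B₁ h₁, C₁ e + D₁ h₁) is an isometry (where B₁ ∈ B(H₁, E), C₁ ∈ B(E, H₁), D₁ ∈ B(H₁)), and U₂ on E ⊕ H₂ given by U₂(e, h₂) = (A e + B₂ h₂, C₂ e + D₂ h₂) is an isometry (where A ∈ B(E), B₂ ∈ B(H₂, E), C₂ ∈ B(E, H₂), D₂ ∈ B(H₂)). Then the operator U on E ⊕ H₁ ⊕ H₂ defined by U(e, h₁, h₂) = (B₁ h₁, C₁ A e + D₁ h₁ + C₁ B₂ h₂, C₂ e + D₂ h₂) is an isometry. -/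

import Mathlib

open ContinuousLinearMap

/-- The element `(x, y)` of the Hilbert-space direct sum `X ⊕ Y`,
modelled as `WithLp 2 (X × Y)`. -/
noncomputable def mk2 {X Y : Type*} (x : X) (y : Y) : WithLp 2 (X × Y) :=
  (WithLp.equiv 2 (X × Y)).symm (x, y)

/-- The element `(e, h₁, h₂)` of the Hilbert-space direct sum `E ⊕ H₁ ⊕ H₂`,
modelled as `WithLp 2 (E × WithLp 2 (H₁ × H₂))`. -/
noncomputable def mk3 {E H₁ H₂ : Type*} (e : E) (h₁ : H₁) (h₂ : H₂) :
    WithLp 2 (E × WithLp 2 (H₁ × H₂)) :=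
  (WithLp.equiv 2 _).symm (e, (WithLp.equiv 2 (H₁ × H₂)).symm (h₁, h₂))

lemma norm_mk2_sq {X Y : Type*} [NormedAddCommGroup X] [NormedAddCommGroup Y]
    (a : X) (b : Y) : ‖mk2 a b‖ ^ 2 = ‖a‖ ^ 2 + ‖b‖ ^ 2 :=
  WithLp.prod_norm_sq_eq_of_L2 _

/-- If `U₁(e, h₁) = (B₁ h₁, C₁ e + D₁ h₁)` and
`U₂(e, h₂) = (A e + B₂ h₂, C₂ e + D₂ h₂)` are isometries, then
`U(e, h₁, h₂) = (B₁ h₁, C₁ A e + D₁ h₁ + C₁ B₂ h₂, C₂ e + D₂ h₂)` is an isometry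
on `E ⊕ H₁ ⊕ H₂`. -/
theorem statement2
    {E H₁ H₂ : Type*}
    [NormedAddCommGroup E] [InnerProductSpace ℂ E] [CompleteSpace E]
    [NormedAddCommGroup H₁] [InnerProductSpace ℂ H₁] [CompleteSpace H₁]
    [NormedAddCommGroup H₂] [InnerProductSpace ℂ H₂] [CompleteSpace H₂]
    (A : E →L[ℂ] E) (B₁ : H₁ →L[ℂ] E) (B₂ : H₂ →L[ℂ] E)
    (C₁ : E →L[ℂ] H₁) (C₂ : E →L[ℂ] H₂)
    (D₁ : H₁ →L[ℂ] H₁) (D₂ : H₂ →L[ℂ] H₂)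
    (U₁ : WithLp 2 (E × H₁) →L[ℂ] WithLp 2 (E × H₁))
    (hU₁ : ∀ (e : E) (h₁ : H₁), U₁ (mk2 e h₁) = mk2 (B₁ h₁) (C₁ e + D₁ h₁))
    (hIso₁ : Isometry U₁)
    (U₂ : WithLp 2 (E × H₂) →L[ℂ] WithLp 2 (E × H₂))
    (hU₂ : ∀ (e : E) (h₂ : H₂), U₂ (mk2 e h₂) = mk2 (A e + B₂ h₂) (C₂ e + D₂ h₂))
    (hIso₂ : Isometry U₂)
    (U : WithLp 2 (E × WithLp 2 (H₁ × H₂)) →L[ℂ] WithLp 2 (E × WithLp 2 (H₁ × H₂)))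
    (hU : ∀ (e : E) (h₁ : H₁) (h₂ : H₂),
      U (mk3 e h₁ h₂) = mk3 (B₁ h₁) (C₁ (A e) + D₁ h₁ + C₁ (B₂ h₂)) (C₂ e + D₂ h₂)) :
    Isometry U := by
  refine AddMonoidHomClass.isometry_of_norm U ?_
  intro x
  have hx : x = mk3 x.ofLp.1 x.ofLp.2.ofLp.1 x.ofLp.2.ofLp.2 := rfl
  set e := x.ofLp.1; set h₁ := x.ofLp.2.ofLp.1; set h₂ := x.ofLp.2.ofLp.2
  have n1 : ∀ (a : E) (b : H₁), ‖U₁ (mk2 a b)‖ = ‖mk2 a b‖ :=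
    fun a b => hIso₁.norm_map_of_map_zero (map_zero U₁) _
  have n2 : ∀ (a : E) (b : H₂), ‖U₂ (mk2 a b)‖ = ‖mk2 a b‖ :=
    fun a b => hIso₂.norm_map_of_map_zero (map_zero U₂) _
  have key2 : ‖A e + B₂ h₂‖ ^ 2 + ‖C₂ e + D₂ h₂‖ ^ 2 = ‖e‖ ^ 2 + ‖h₂‖ ^ 2 := by
    have := n2 e h₂
    rw [hU₂] at this
    calc ‖A e + B₂ h₂‖ ^ 2 + ‖C₂ e + D₂ h₂‖ ^ 2
        = ‖mk2 (A e + B₂ h₂) (C₂ e + D₂ h₂)‖ ^ 2 := (norm_mk2_sq _ _).symm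
      _ = ‖mk2 e h₂‖ ^ 2 := by rw [this]
      _ = ‖e‖ ^ 2 + ‖h₂‖ ^ 2 := norm_mk2_sq _ _
  have key1 : ‖B₁ h₁‖ ^ 2 + ‖C₁ (A e + B₂ h₂) + D₁ h₁‖ ^ 2
      = ‖A e + B₂ h₂‖ ^ 2 + ‖h₁‖ ^ 2 := by
    have := n1 (A e + B₂ h₂) h₁
    rw [hU₁] at this
    calc ‖B₁ h₁‖ ^ 2 + ‖C₁ (A e + B₂ h₂) + D₁ h₁‖ ^ 2
        = ‖mk2 (B₁ h₁) (C₁ (A e + B₂ h₂) + D₁ h₁)‖ ^ 2 := (norm_mk2_sq _ _).symm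
      _ = ‖mk2 (A e + B₂ h₂) h₁‖ ^ 2 := by rw [this]
      _ = ‖A e + B₂ h₂‖ ^ 2 + ‖h₁‖ ^ 2 := norm_mk2_sq _ _
  have hrw : C₁ (A e) + D₁ h₁ + C₁ (B₂ h₂) = C₁ (A e + B₂ h₂) + D₁ h₁ := by
    rw [map_add]; abel
  rw [← Real.sqrt_sq (norm_nonneg (U x)), ← Real.sqrt_sq (norm_nonneg x)]
  congr 1
  rw [hx, hU, hrw]
  have sq3 : ∀ (a : E) (b : H₁) (c : H₂),
      ‖mk3 a b c‖ ^ 2 = ‖a‖ ^ 2 + ‖b‖ ^ 2 + ‖c‖ ^ 2 := by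
    intro a b c
    have : ‖mk3 a b c‖ ^ 2 = ‖a‖ ^ 2 + ‖mk2 b c‖ ^ 2 := WithLp.prod_norm_sq_eq_of_L2 _
    rw [this, norm_mk2_sq]; ring
  rw [sq3, sq3]
  linarith
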